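/- The modified κ-entanglement is sub-additive: for bipartite states ρ on AB and ω on A'B', Ẽ_κ(ρ ⊗ ω) ≤ Ẽ_κ(ρ) + Ẽ_κ(ω). The key step: if S ± ρ^Γ ≥ 0 and T ± ω^Γ ≥ 0 then S⊗T ± ρ^Γ⊗ω^Γ ≥ 0, using the identity S⊗T ± ρ^Γ⊗ω^Γ = (1/2)[(S+ρ^Γ)⊗(T±ω^Γ) + (S−ρ^Γ)⊗(T∓ω^Γ)]. -/

import Mathlib

open Matrix BigOperators
open scoped Kronecker ComplexOrder

noncomputable section

abbrev BOp (d : ℕ) := Matrix (Fin d × Fin d) (Fin d × Fin d) ℂ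

/-- Loewner order: `A ≤ B` iff `B - A` is positive semidefinite. -/
def loe {n : Type*} [Fintype n] (A B : Matrix n n ℂ) : Prop := (B - A).PosSemidef

/-- A density operator: positive semidefinite with unit trace. -/
def IsState {n : Type*} [Fintype n] [DecidableEq n] (ρ : Matrix n n ℂ) : Prop :=
  ρ.PosSemidef ∧ ρ.trace = 1

/-- Separable bipartite state (convex combination of product states). -/
def IsSep {a b : Type*} [Fintype a] [DecidableEq a] [Fintype b] [DecidableEq b]
    (ρ : Matrix (a × b) (a × b) ℂ) : Prop :=
  ∃ (m : ℕ) (p : Fin m → ℝ) (A : Fin m → Matrix a a ℂ) (B : Fin m → Matrix b b ℂ),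
    (∀ i, 0 ≤ p i) ∧ (∑ i, p i) = 1 ∧
    (∀ i, IsState (A i)) ∧ (∀ i, IsState (B i)) ∧
    ρ = ∑ i, ((p i : ℝ) : ℂ) • (A i ⊗ₖ B i)

/-- The cone generated by separable states. -/
def InSepCone {a b : Type*} [Fintype a] [DecidableEq a] [Fintype b] [DecidableEq b]
    (S : Matrix (a × b) (a × b) ℂ) : Prop :=
  ∃ (c : ℝ) (σ : Matrix (a × b) (a × b) ℂ), 0 ≤ c ∧ IsSep σ ∧ S = ((c : ℝ) : ℂ) • σ

/-- Maximally entangled state `Φ_d` on `ℂ^d ⊗ ℂ^d`. -/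
def PhiME (d : ℕ) : BOp d := fun p q => if p.1 = p.2 ∧ q.1 = q.2 then ((1 : ℂ) / d) else 0

/-- `τ_d = (𝟙 - Φ_d)/(d² - 1)`. -/
def tauME (d : ℕ) : BOp d := (((d : ℂ)^2 - 1))⁻¹ • (1 - PhiME d)

/-- Partial transpose on the second tensor factor. -/
def pt {a b : Type*} (A : Matrix (a × b) (a × b) ℂ) : Matrix (a × b) (a × b) ℂ :=
  fun p q => A (p.1, q.2) (q.1, p.2)

/-- Total positive-semidefinite square root (junk value `0` off the PSD cone). -/
noncomputable def msqrt {n : Type*} [Fintype n] [DecidableEq n] (A : Matrix n n ℂ) :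
    Matrix n n ℂ :=
  open scoped Classical in
  if h : A.PosSemidef then (h.1.eigenvectorUnitary.1 *
      diagonal ((↑) ∘ (√·) ∘ h.1.eigenvalues) * (star h.1.eigenvectorUnitary : Matrix n n ℂ))
    else 0

/-- Trace norm `‖A‖₁ = Tr √(AᴴA)`. -/
noncomputable def traceNorm {n : Type*} [Fintype n] [DecidableEq n] (A : Matrix n n ℂ) : ℝ :=
  (msqrt (Aᴴ * A)).trace.re


/-- Modified κ-entanglement `Ẽ_κ(ρ) = log₂ min{Tr S : -S ≤ ρ^Γ ≤ S, S ∈ cone(S)}`. -/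
noncomputable def Ekappa {a b : Type*} [Fintype a] [DecidableEq a] [Fintype b] [DecidableEq b]
    (ρ : Matrix (a × b) (a × b) ℂ) : ℝ :=
  Real.logb 2
    (sInf {t : ℝ | ∃ S, InSepCone S ∧ loe (-S) (pt ρ) ∧ loe (pt ρ) S ∧ t = S.trace.re})


-- ===================== auxiliary lemmas =====================
set_option linter.unusedSectionVars false
set_option maxHeartbeats 1000000

section Aux

lemma conjT_kron {m n : Type*} [Fintype m] [Fintype n] (A : Matrix m m ℂ) (B : Matrix n n ℂ) :
    (A ⊗ₖ B)ᴴ = Aᴴ ⊗ₖ Bᴴ := by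
  ext ⟨i,j⟩ ⟨k,l⟩
  simp [conjTranspose_apply, kroneckerMap_apply]

lemma psd_kron {m n : Type*} [Fintype m] [DecidableEq m] [Fintype n] [DecidableEq n]
    {A : Matrix m m ℂ} {B : Matrix n n ℂ} (hA : A.PosSemidef)
    (hB : B.PosSemidef) : (A ⊗ₖ B).PosSemidef := by
  exact hA.kronecker hB

lemma psd_smul {m : Type*} [Fintype m] {A : Matrix m m ℂ} (hA : A.PosSemidef) {c : ℝ}
    (hc : 0 ≤ c) : (((c:ℝ):ℂ) • A).PosSemidef := by
  refine Matrix.PosSemidef.of_dotProduct_mulVec_nonneg ?_ (fun x => ?_)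
  · unfold Matrix.IsHermitian
    rw [conjTranspose_smul, hA.1]
    simp
  · have := hA.dotProduct_mulVec_nonneg x
    rw [smul_mulVec, dotProduct_smul]
    exact mul_nonneg (Complex.zero_le_real.mpr hc) this

lemma psd_half_add {m : Type*} [Fintype m] {A B : Matrix m m ℂ} (hA : A.PosSemidef)
    (hB : B.PosSemidef) : (((1/2 : ℝ):ℂ) • A + ((1/2 : ℝ):ℂ) • B).PosSemidef :=
  (psd_smul hA (by norm_num)).add (psd_smul hB (by norm_num))

lemma key_psd {m n : Type*} [Fintype m] [DecidableEq m] [Fintype n] [DecidableEq n]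
    {S P : Matrix m m ℂ} {T Q : Matrix n n ℂ}
    (h1 : (S + P).PosSemidef) (h2 : (S - P).PosSemidef)
    (h3 : (T + Q).PosSemidef) (h4 : (T - Q).PosSemidef) :
    (S ⊗ₖ T - P ⊗ₖ Q).PosSemidef ∧ (S ⊗ₖ T + P ⊗ₖ Q).PosSemidef := by
  constructor
  · have hid : S ⊗ₖ T - P ⊗ₖ Q
        = ((1/2 : ℝ):ℂ) • ((S + P) ⊗ₖ (T - Q)) + ((1/2 : ℝ):ℂ) • ((S - P) ⊗ₖ (T + Q)) := by
      ext ⟨i,j⟩ ⟨k,l⟩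
      simp [kroneckerMap_apply, Matrix.sub_apply, Matrix.add_apply, Matrix.smul_apply]
      ring
    rw [hid]; exact psd_half_add (psd_kron h1 h4) (psd_kron h2 h3)
  · have hid : S ⊗ₖ T + P ⊗ₖ Q
        = ((1/2 : ℝ):ℂ) • ((S + P) ⊗ₖ (T + Q)) + ((1/2 : ℝ):ℂ) • ((S - P) ⊗ₖ (T - Q)) := by
      ext ⟨i,j⟩ ⟨k,l⟩
      simp [kroneckerMap_apply, Matrix.sub_apply, Matrix.add_apply, Matrix.smul_apply]
      ring
    rw [hid]; exact psd_half_add (psd_kron h1 h3) (psd_kron h2 h4)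

lemma pt_reindex_kron {a b a' b' : Type*} [Fintype a] [DecidableEq a] [Fintype b] [DecidableEq b]
    [Fintype a'] [DecidableEq a'] [Fintype b'] [DecidableEq b']
    (ρ : Matrix (a × b) (a × b) ℂ) (ω : Matrix (a' × b') (a' × b') ℂ) :
    pt ((Matrix.reindex (Equiv.prodProdProdComm a b a' b')
        (Equiv.prodProdProdComm a b a' b')) (ρ ⊗ₖ ω))
      = (Matrix.reindex (Equiv.prodProdProdComm a b a' b')
        (Equiv.prodProdProdComm a b a' b')) (pt ρ ⊗ₖ pt ω) := by
  ext ⟨⟨x,x'⟩,⟨y,y'⟩⟩ ⟨⟨u,u'⟩,⟨v,v'⟩⟩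
  rfl

lemma psd_reindex {α β : Type*} [Fintype α] [Fintype β] (e : α ≃ β) {M : Matrix α α ℂ}
    (hM : M.PosSemidef) : (Matrix.reindex e e M).PosSemidef :=
  hM.submatrix e.symm

lemma trace_reindex {α β : Type*} [Fintype α] [Fintype β] [DecidableEq α] [DecidableEq β]
    (e : α ≃ β) (M : Matrix α α ℂ) : (Matrix.reindex e e M).trace = M.trace := by
  simp only [Matrix.trace, Matrix.reindex_apply, Matrix.submatrix_apply, Matrix.diag_apply]
  exact Fintype.sum_equiv e.symm _ _ (fun _ => rfl)

lemma psd_trace_re_nonneg {α : Type*} [Fintype α] [DecidableEq α] {M : Matrix α α ℂ}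
    (hM : M.PosSemidef) : 0 ≤ M.trace.re := by
  have h : ∀ i, 0 ≤ (M i i).re := by
    intro i
    have := hM.re_dotProduct_nonneg (Pi.single i 1)
    simpa [dotProduct, mulVec, Pi.single_apply, Finset.mul_sum] using this
  simpa [Matrix.trace, Complex.re_sum] using Finset.sum_nonneg (fun i _ => h i)

lemma psd_trace_im_zero {α : Type*} [Fintype α] [DecidableEq α] {M : Matrix α α ℂ}
    (hM : M.IsHermitian) : M.trace.im = 0 := by
  have h := Matrix.trace_conjTranspose M
  rw [hM.eq] at h
  have h' : (starRingEnd ℂ) M.trace = M.trace := h.symm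
  exact Complex.conj_eq_iff_im.mp h'

lemma trace_pt {a b : Type*} [Fintype a] [Fintype b] (ρ : Matrix (a × b) (a × b) ℂ) :
    (pt ρ).trace = ρ.trace := rfl

lemma pt_hermitian {a b : Type*} {ρ : Matrix (a × b) (a × b) ℂ} (h : ρ.IsHermitian) :
    (pt ρ).IsHermitian := by
  unfold Matrix.IsHermitian
  ext ⟨x,y⟩ ⟨u,v⟩
  have := congrFun (congrFun h.eq (x, v)) (u, y)
  simpa [Matrix.conjTranspose_apply, pt] using this

lemma feas_lower {α : Type*} [Fintype α] [DecidableEq α] {S P : Matrix α α ℂ}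
    (h : (S - P).PosSemidef) (hP : P.trace = 1) : 1 ≤ S.trace.re := by
  have h0 := psd_trace_re_nonneg h
  rw [Matrix.trace_sub, Complex.sub_re, hP] at h0
  simpa using h0

lemma quad_real {n : Type*} [Fintype n] {A : Matrix n n ℂ} (hA : A.IsHermitian) (x : n → ℂ) :
    ((star x) ⬝ᵥ (A *ᵥ x)).im = 0 := by
  have h : (starRingEnd ℂ) ((star x) ⬝ᵥ (A *ᵥ x)) = (star x) ⬝ᵥ (A *ᵥ x) := by
    calc (starRingEnd ℂ) ((star x) ⬝ᵥ (A *ᵥ x))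
        = star ((star x) ⬝ᵥ (A *ᵥ x)) := rfl
      _ = (star (A *ᵥ x)) ⬝ᵥ x := by
            rw [star_dotProduct]; simp
      _ = ((star x) ᵥ* Aᴴ) ⬝ᵥ x := by rw [Matrix.star_mulVec]
      _ = (star x) ⬝ᵥ (Aᴴ *ᵥ x) := by rw [← Matrix.dotProduct_mulVec]
      _ = (star x) ⬝ᵥ (A *ᵥ x) := by rw [hA.eq]
  exact Complex.conj_eq_iff_im.mp h

lemma quad_abs_bound {n : Type*} [Fintype n] (A : Matrix n n ℂ) (x : n → ℂ) :
    ‖(star x) ⬝ᵥ (A *ᵥ x)‖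
      ≤ (∑ i, ∑ j, ‖A i j‖) * ∑ k, Complex.normSq (x k) := by
  have hxk : ∀ i j : n, ‖x i‖ * ‖x j‖ ≤ ∑ k, Complex.normSq (x k) := by
    intro i j
    have h1 : Complex.normSq (x i) ≤ ∑ k, Complex.normSq (x k) :=
      Finset.single_le_sum (fun k _ => Complex.normSq_nonneg _) (Finset.mem_univ i)
    have h2 : Complex.normSq (x j) ≤ ∑ k, Complex.normSq (x k) :=
      Finset.single_le_sum (fun k _ => Complex.normSq_nonneg _) (Finset.mem_univ j)
    nlinarith [Complex.sq_norm (x i), Complex.sq_norm (x j), norm_nonneg (x i),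
      norm_nonneg (x j), sq_nonneg (‖x i‖ - ‖x j‖)]
  calc ‖(star x) ⬝ᵥ (A *ᵥ x)‖
      = ‖∑ i, ∑ j, (starRingEnd ℂ) (x i) * (A i j * x j)‖ := by
        simp [dotProduct, mulVec, Finset.mul_sum, Pi.star_apply]
    _ ≤ ∑ i, ∑ j, ‖(starRingEnd ℂ) (x i) * (A i j * x j)‖ := by
        refine (norm_sum_le _ _).trans (Finset.sum_le_sum fun i _ => norm_sum_le _ _)
    _ = ∑ i, ∑ j, ‖A i j‖ * (‖x i‖ * ‖x j‖) := by
        simp only [norm_mul]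
        exact Finset.sum_congr rfl fun i _ => Finset.sum_congr rfl fun j _ => by
          rw [Complex.norm_conj]; ring
    _ ≤ ∑ i, ∑ j, ‖A i j‖ * ∑ k, Complex.normSq (x k) := by
        refine Finset.sum_le_sum fun i _ => Finset.sum_le_sum fun j _ =>
          mul_le_mul_of_nonneg_left (hxk i j) (norm_nonneg _)
    _ = (∑ i, ∑ j, ‖A i j‖) * ∑ k, Complex.normSq (x k) := by
        rw [Finset.sum_mul]; exact Finset.sum_congr rfl fun i _ => (Finset.sum_mul _ _ _).symm

lemma dot_self_eq {n : Type*} [Fintype n] (x : n → ℂ) :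
    (star x) ⬝ᵥ x = ((∑ k, Complex.normSq (x k) : ℝ) : ℂ) := by
  simp only [dotProduct, Pi.star_apply, Complex.ofReal_sum]
  exact Finset.sum_congr rfl fun k _ => by
    rw [Complex.normSq_eq_conj_mul_self]; rfl

lemma exists_psd_bound {n : Type*} [Fintype n] [DecidableEq n] {A : Matrix n n ℂ}
    (hA : A.IsHermitian) :
    ∃ c : ℝ, 0 ≤ c ∧ (((c:ℝ):ℂ) • 1 - A).PosSemidef ∧ (((c:ℝ):ℂ) • 1 + A).PosSemidef := by
  set c : ℝ := ∑ i, ∑ j, ‖A i j‖ with hc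
  have hc0 : 0 ≤ c := Finset.sum_nonneg fun i _ => Finset.sum_nonneg fun j _ => norm_nonneg _
  have hherm1 : (((c:ℝ):ℂ) • (1 : Matrix n n ℂ)).IsHermitian := by
    unfold Matrix.IsHermitian
    rw [conjTranspose_smul, conjTranspose_one]
    simp
  have hquad : ∀ x : n → ℂ, ((star x) ⬝ᵥ ((((c:ℝ):ℂ) • (1:Matrix n n ℂ)) *ᵥ x))
      = ((c * ∑ k, Complex.normSq (x k) : ℝ) : ℂ) := by
    intro x
    rw [smul_mulVec, one_mulVec, dotProduct_smul, dot_self_eq]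
    rw [smul_eq_mul]
    push_cast
    ring
  refine ⟨c, hc0, .of_dotProduct_mulVec_nonneg (hherm1.sub hA) fun x => ?_, .of_dotProduct_mulVec_nonneg (hherm1.add hA) fun x => ?_⟩
  · rw [Matrix.sub_mulVec, dotProduct_sub, hquad]
    set z := (star x) ⬝ᵥ (A *ᵥ x) with hz
    rw [Complex.le_def]
    constructor
    · simp only [Complex.sub_re, Complex.ofReal_re, Complex.zero_re, sub_nonneg]
      have h1 : z.re ≤ ‖z‖ := Complex.re_le_norm z
      have h2 := quad_abs_bound A x
      linarith
    · simp only [Complex.sub_im, Complex.ofReal_im, Complex.zero_im]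
      rw [show z.im = 0 from quad_real hA x]; ring
  · rw [Matrix.add_mulVec, dotProduct_add, hquad]
    set z := (star x) ⬝ᵥ (A *ᵥ x) with hz
    rw [Complex.le_def]
    constructor
    · simp only [Complex.add_re, Complex.ofReal_re, Complex.zero_re]
      have h1 : -‖z‖ ≤ z.re := by
        have := Complex.abs_re_le_norm z
        cases abs_le.mp (by simpa using this) with
        | intro hl hr => linarith
      have h2 := quad_abs_bound A x
      linarith
    · simp only [Complex.add_im, Complex.ofReal_im, Complex.zero_im]
      rw [show z.im = 0 from quad_real hA x]; ring

lemma IsSep.posSemidef {a b : Type*} [Fintype a] [DecidableEq a] [Fintype b] [DecidableEq b]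
    {σ : Matrix (a × b) (a × b) ℂ} (h : IsSep σ) : σ.PosSemidef := by
  obtain ⟨m, p, A, B, hp, -, hA, hB, rfl⟩ := h
  have hterm : ∀ i : Fin m, (((p i : ℝ) : ℂ) • (A i ⊗ₖ B i)).PosSemidef :=
    fun i => psd_smul (psd_kron (hA i).1 (hB i).1) (hp i)
  classical
  exact Finset.sum_induction _ _ (fun x y hx hy => hx.add hy) Matrix.PosSemidef.zero
    (fun i _ => hterm i)

lemma InSepCone.posSemidef {a b : Type*} [Fintype a] [DecidableEq a] [Fintype b] [DecidableEq b]
    {S : Matrix (a × b) (a × b) ℂ} (h : InSepCone S) : S.PosSemidef := by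
  obtain ⟨c, σ, hc, hσ, rfl⟩ := h
  exact psd_smul hσ.posSemidef hc

lemma inSepCone_one {a b : Type*} [Fintype a] [DecidableEq a] [Fintype b] [DecidableEq b]
    [Nonempty a] [Nonempty b] : InSepCone (1 : Matrix (a × b) (a × b) ℂ) := by
  classical
  set N : ℕ := Fintype.card (a × b) with hN
  have hNpos : 0 < N := Fintype.card_pos
  set f : Fin N ≃ a × b := (Fintype.equivFin (a × b)).symm with hf
  refine ⟨(N : ℝ), ∑ i : Fin N, (((1 / N : ℝ)) : ℂ) •
      ((Matrix.diagonal (Pi.single (f i).1 1) : Matrix a a ℂ) ⊗ₖ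
       (Matrix.diagonal (Pi.single (f i).2 1) : Matrix b b ℂ)), by positivity, ?_, ?_⟩
  · refine ⟨N, fun _ => 1 / N, fun i => Matrix.diagonal (Pi.single (f i).1 1),
      fun i => Matrix.diagonal (Pi.single (f i).2 1), fun i => by positivity, ?_, ?_, ?_, rfl⟩
    · rw [Finset.sum_const, Finset.card_univ, Fintype.card_fin, nsmul_eq_mul]
      exact mul_one_div_cancel (Nat.cast_ne_zero.mpr hNpos.ne')
    · intro i
      refine ⟨Matrix.PosSemidef.diagonal ?_, ?_⟩
      · intro k
        by_cases hk : k = (f i).1 <;> simp [Pi.single_apply, hk]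
      · simp [Matrix.trace_diagonal, Pi.single_apply]
    · intro i
      refine ⟨Matrix.PosSemidef.diagonal ?_, ?_⟩
      · intro k
        by_cases hk : k = (f i).2 <;> simp [Pi.single_apply, hk]
      · simp [Matrix.trace_diagonal, Pi.single_apply]
  · rw [Finset.smul_sum]
    have hterm : ∀ i : Fin N, ((N : ℝ) : ℂ) • ((((1 / N : ℝ)) : ℂ) •
        ((Matrix.diagonal (Pi.single (f i).1 1) : Matrix a a ℂ) ⊗ₖ
         (Matrix.diagonal (Pi.single (f i).2 1) : Matrix b b ℂ)))
        = (Matrix.diagonal (Pi.single (f i).1 1) : Matrix a a ℂ) ⊗ₖ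
          (Matrix.diagonal (Pi.single (f i).2 1) : Matrix b b ℂ) := by
      intro i
      rw [smul_smul]
      have h1 : ((N : ℝ) : ℂ) * (((1 / N : ℝ)) : ℂ) = 1 := by
        push_cast
        field_simp
      rw [h1, one_smul]
    rw [Finset.sum_congr rfl (fun i _ => hterm i)]
    symm
    rw [Equiv.sum_comp f (fun q => (Matrix.diagonal (Pi.single q.1 1) : Matrix a a ℂ) ⊗ₖ
      (Matrix.diagonal (Pi.single q.2 1) : Matrix b b ℂ))]
    ext ⟨p,q⟩ ⟨r,s⟩
    simp only [Matrix.sum_apply, Matrix.kroneckerMap_apply, Matrix.diagonal_apply,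
      Matrix.one_apply, Pi.single_apply, Fintype.sum_prod_type]
    by_cases hpr : p = r <;> by_cases hqs : q = s <;>
      simp [hpr, hqs, Prod.ext_iff, Finset.sum_ite_eq, mul_ite]

lemma isSep_kron {a b a' b' : Type*} [Fintype a] [DecidableEq a] [Fintype b] [DecidableEq b]
    [Fintype a'] [DecidableEq a'] [Fintype b'] [DecidableEq b']
    {σ : Matrix (a × b) (a × b) ℂ} {σ' : Matrix (a' × b') (a' × b') ℂ}
    (hσ : IsSep σ) (hσ' : IsSep σ') :
    IsSep ((Matrix.reindex (Equiv.prodProdProdComm a b a' b')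
        (Equiv.prodProdProdComm a b a' b')) (σ ⊗ₖ σ')) := by
  classical
  obtain ⟨m, p, A, B, hp, hps, hA, hB, rfl⟩ := hσ
  obtain ⟨m', q, A', B', hq, hqs, hA', hB', rfl⟩ := hσ'
  set g : Fin (m * m') ≃ Fin m × Fin m' := finProdFinEquiv.symm with hg
  refine ⟨m * m', fun k => p (g k).1 * q (g k).2,
    fun k => A (g k).1 ⊗ₖ A' (g k).2, fun k => B (g k).1 ⊗ₖ B' (g k).2,
    fun k => mul_nonneg (hp _) (hq _), ?_, ?_, ?_, ?_⟩
  · rw [Equiv.sum_comp g (fun ij : Fin m × Fin m' => p ij.1 * q ij.2)]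
    rw [Fintype.sum_prod_type]
    rw [← Finset.sum_mul_sum, hps, hqs]
    · norm_num
  · intro k
    refine ⟨psd_kron (hA _).1 (hA' _).1, ?_⟩
    rw [Matrix.trace_kronecker, (hA _).2, (hA' _).2, one_mul]
  · intro k
    refine ⟨psd_kron (hB _).1 (hB' _).1, ?_⟩
    rw [Matrix.trace_kronecker, (hB _).2, (hB' _).2, one_mul]
  · have hsum : (∑ k : Fin (m * m'), (((p (g k).1 * q (g k).2 : ℝ)) : ℂ) •
        ((A (g k).1 ⊗ₖ A' (g k).2) ⊗ₖ (B (g k).1 ⊗ₖ B' (g k).2)))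
        = ∑ ij : Fin m × Fin m', (((p ij.1 * q ij.2 : ℝ)) : ℂ) •
        ((A ij.1 ⊗ₖ A' ij.2) ⊗ₖ (B ij.1 ⊗ₖ B' ij.2)) :=
      Fintype.sum_equiv g _ _ (fun k => rfl)
    refine Eq.trans ?_ hsum.symm
    ext ⟨⟨x,x'⟩,⟨y,y'⟩⟩ ⟨⟨u,u'⟩,⟨v,v'⟩⟩
    simp only [Matrix.reindex_apply, Matrix.submatrix_apply, Equiv.prodProdProdComm_symm,
      Equiv.prodProdProdComm_apply, Matrix.kroneckerMap_apply, Matrix.sum_apply,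
      Matrix.smul_apply, smul_eq_mul, Fintype.sum_prod_type, Finset.sum_mul, Finset.mul_sum]
    rw [Finset.sum_comm]
    apply Finset.sum_congr rfl
    intro i _
    apply Finset.sum_congr rfl
    intro j _
    push_cast
    ring

lemma inSepCone_kron {a b a' b' : Type*} [Fintype a] [DecidableEq a] [Fintype b] [DecidableEq b]
    [Fintype a'] [DecidableEq a'] [Fintype b'] [DecidableEq b']
    {S : Matrix (a × b) (a × b) ℂ} {T : Matrix (a' × b') (a' × b') ℂ}
    (hS : InSepCone S) (hT : InSepCone T) :
    InSepCone ((Matrix.reindex (Equiv.prodProdProdComm a b a' b')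
        (Equiv.prodProdProdComm a b a' b')) (S ⊗ₖ T)) := by
  obtain ⟨c, σ, hc, hσ, rfl⟩ := hS
  obtain ⟨c', σ', hc', hσ', rfl⟩ := hT
  refine ⟨c * c', (Matrix.reindex (Equiv.prodProdProdComm a b a' b')
      (Equiv.prodProdProdComm a b a' b')) (σ ⊗ₖ σ'), mul_nonneg hc hc',
      isSep_kron hσ hσ', ?_⟩
  ext ⟨⟨x,x'⟩,⟨y,y'⟩⟩ ⟨⟨u,u'⟩,⟨v,v'⟩⟩
  simp only [Matrix.reindex_apply, Matrix.submatrix_apply, Matrix.kroneckerMap_apply,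
    Matrix.smul_apply, smul_eq_mul]
  push_cast
  ring

lemma sInf_logb_bound (Fp Fw Ft : Set ℝ) (hnep : Fp.Nonempty) (hnew : Fw.Nonempty)
    (hlbp : ∀ t ∈ Fp, (1:ℝ) ≤ t) (hlbw : ∀ t ∈ Fw, (1:ℝ) ≤ t) (hlbt : ∀ t ∈ Ft, (1:ℝ) ≤ t)
    (hprod : ∀ s ∈ Fp, ∀ t ∈ Fw, s * t ∈ Ft) :
    Real.logb 2 (sInf Ft) ≤ Real.logb 2 (sInf Fp) + Real.logb 2 (sInf Fw) := by
  obtain ⟨s0, hs0⟩ := hnep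
  obtain ⟨t0, ht0⟩ := hnew
  have hnet : Ft.Nonempty := ⟨s0 * t0, hprod _ hs0 _ ht0⟩
  have hbddt : BddBelow Ft := ⟨1, fun t ht => hlbt t ht⟩
  have h1p : 1 ≤ sInf Fp := le_csInf ⟨s0, hs0⟩ hlbp
  have h1w : 1 ≤ sInf Fw := le_csInf ⟨t0, ht0⟩ hlbw
  have h1t : 1 ≤ sInf Ft := le_csInf hnet hlbt
  have hppos : (0:ℝ) < sInf Fp := lt_of_lt_of_le one_pos h1p
  have hwpos : (0:ℝ) < sInf Fw := lt_of_lt_of_le one_pos h1w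
  have htpos : (0:ℝ) < sInf Ft := lt_of_lt_of_le one_pos h1t
  have hmain : sInf Ft ≤ sInf Fp * sInf Fw := by
    have step1 : ∀ t ∈ Fw, sInf Ft ≤ sInf Fp * t := by
      intro t ht
      have htp : (0:ℝ) < t := lt_of_lt_of_le one_pos (hlbw t ht)
      rw [← div_le_iff₀ htp]
      refine le_csInf ⟨s0, hs0⟩ ?_
      intro s hs
      rw [div_le_iff₀ htp]
      exact csInf_le hbddt (hprod s hs t ht)
    have step2 : sInf Ft / sInf Fp ≤ sInf Fw := by
      refine le_csInf ⟨t0, ht0⟩ ?_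
      intro t ht
      rw [div_le_iff₀ hppos]
      linarith [step1 t ht]
    calc sInf Ft = (sInf Ft / sInf Fp) * sInf Fp := by field_simp
      _ ≤ sInf Fw * sInf Fp := mul_le_mul_of_nonneg_right step2 hppos.le
      _ = sInf Fp * sInf Fw := mul_comm _ _
  rw [← Real.logb_mul (ne_of_gt hppos) (ne_of_gt hwpos)]
  exact Real.logb_le_logb_of_le one_lt_two htpos hmain

lemma feas_nonempty {α β : Type*} [Fintype α] [DecidableEq α] [Fintype β] [DecidableEq β]
    [Nonempty α] [Nonempty β] (χ : Matrix (α × β) (α × β) ℂ) (hχ : χ.PosSemidef) :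
    ∃ S, InSepCone S ∧ loe (-S) (pt χ) ∧ loe (pt χ) S := by
  obtain ⟨c, hc0, hcm, hcp⟩ := exists_psd_bound (pt_hermitian hχ.1)
  obtain ⟨c0, σ, hc00, hσ, h1eq⟩ := inSepCone_one (a := α) (b := β)
  refine ⟨((c:ℝ):ℂ) • 1, ⟨c * c0, σ, mul_nonneg hc0 hc00, hσ, ?_⟩, ?_, ?_⟩
  · rw [h1eq, smul_smul, Complex.ofReal_mul]
  · show (pt χ - -(((c:ℝ):ℂ) • 1)).PosSemidef
    rwa [sub_neg_eq_add, add_comm]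
  · exact hcm

end Aux

theorem stmt8 {a b a' b' : Type*}
    [Fintype a] [DecidableEq a] [Fintype b] [DecidableEq b]
    [Fintype a'] [DecidableEq a'] [Fintype b'] [DecidableEq b']
    (ρ : Matrix (a × b) (a × b) ℂ) (ω : Matrix (a' × b') (a' × b') ℂ)
    (hρ : IsState ρ) (hω : IsState ω) :
    (∀ (S : Matrix (a × b) (a × b) ℂ) (T : Matrix (a' × b') (a' × b') ℂ),
        loe (-S) (pt ρ) → loe (pt ρ) S → loe (-T) (pt ω) → loe (pt ω) T →
        loe (-(S ⊗ₖ T)) (pt ρ ⊗ₖ pt ω) ∧ loe (pt ρ ⊗ₖ pt ω) (S ⊗ₖ T)) ∧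
    Ekappa ((Matrix.reindex (Equiv.prodProdProdComm a b a' b')
        (Equiv.prodProdProdComm a b a' b')) (ρ ⊗ₖ ω)) ≤ Ekappa ρ + Ekappa ω := by
  classical
  have hneab : Nonempty (a × b) := by
    by_contra h
    rw [not_nonempty_iff] at h
    have h0 : ρ.trace = 0 := by simp [Matrix.trace]
    rw [hρ.2] at h0
    exact one_ne_zero h0
  have hneab' : Nonempty (a' × b') := by
    by_contra h
    rw [not_nonempty_iff] at h
    have h0 : ω.trace = 0 := by simp [Matrix.trace]
    rw [hω.2] at h0
    exact one_ne_zero h0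
  obtain ⟨hna, hnb⟩ := nonempty_prod.mp hneab
  obtain ⟨hna', hnb'⟩ := nonempty_prod.mp hneab'
  have part1 : ∀ (S : Matrix (a × b) (a × b) ℂ) (T : Matrix (a' × b') (a' × b') ℂ),
      loe (-S) (pt ρ) → loe (pt ρ) S → loe (-T) (pt ω) → loe (pt ω) T →
      loe (-(S ⊗ₖ T)) (pt ρ ⊗ₖ pt ω) ∧ loe (pt ρ ⊗ₖ pt ω) (S ⊗ₖ T) := by
    intro S T h1 h2 h3 h4
    have hS1 : (S + pt ρ).PosSemidef := by
      have h1' : (pt ρ - -S).PosSemidef := h1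
      rwa [sub_neg_eq_add, add_comm] at h1'
    have hS2 : (S - pt ρ).PosSemidef := h2
    have hT1 : (T + pt ω).PosSemidef := by
      have h3' : (pt ω - -T).PosSemidef := h3
      rwa [sub_neg_eq_add, add_comm] at h3'
    have hT2 : (T - pt ω).PosSemidef := h4
    have hkey := key_psd hS1 hS2 hT1 hT2
    constructor
    · show (pt ρ ⊗ₖ pt ω - -(S ⊗ₖ T)).PosSemidef
      rw [sub_neg_eq_add, add_comm]
      exact hkey.2
    · exact hkey.1
  refine ⟨part1, ?_⟩
  set e := Equiv.prodProdProdComm a b a' b' with he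
  set τ := (Matrix.reindex e e) (ρ ⊗ₖ ω) with hτ
  have hτtr : τ.trace = 1 := by
    rw [hτ, trace_reindex, Matrix.trace_kronecker, hρ.2, hω.2, one_mul]
  show Real.logb 2
      (sInf {t : ℝ | ∃ S, InSepCone S ∧ loe (-S) (pt τ) ∧ loe (pt τ) S ∧ t = S.trace.re})
    ≤ Real.logb 2
      (sInf {t : ℝ | ∃ S, InSepCone S ∧ loe (-S) (pt ρ) ∧ loe (pt ρ) S ∧ t = S.trace.re})
    + Real.logb 2
      (sInf {t : ℝ | ∃ S, InSepCone S ∧ loe (-S) (pt ω) ∧ loe (pt ω) S ∧ t = S.trace.re})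
  obtain ⟨S0, hS0sep, hS0a, hS0b⟩ := feas_nonempty ρ hρ.1
  obtain ⟨T0, hT0sep, hT0a, hT0b⟩ := feas_nonempty ω hω.1
  refine sInf_logb_bound _ _ _ ⟨S0.trace.re, S0, hS0sep, hS0a, hS0b, rfl⟩
    ⟨T0.trace.re, T0, hT0sep, hT0a, hT0b, rfl⟩ ?_ ?_ ?_ ?_
  · rintro t ⟨S, hsep, h1, h2, rfl⟩
    exact feas_lower h2 (by rw [trace_pt, hρ.2])
  · rintro t ⟨S, hsep, h1, h2, rfl⟩
    exact feas_lower h2 (by rw [trace_pt, hω.2])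
  · rintro t ⟨S, hsep, h1, h2, rfl⟩
    exact feas_lower h2 (by rw [trace_pt, hτtr])
  · rintro s ⟨S, hSsep, hS1, hS2, rfl⟩ t ⟨T, hTsep, hT1, hT2, rfl⟩
    have hkey := part1 S T hS1 hS2 hT1 hT2
    have hptτ : pt τ = (Matrix.reindex e e) (pt ρ ⊗ₖ pt ω) := by
      rw [hτ, he]
      exact pt_reindex_kron ρ ω
    refine ⟨(Matrix.reindex e e) (S ⊗ₖ T), ?_, ?_, ?_, ?_⟩
    · rw [he]; exact inSepCone_kron hSsep hTsep
    · show (pt τ - -((Matrix.reindex e e) (S ⊗ₖ T))).PosSemidef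
      have heq : pt τ - -((Matrix.reindex e e) (S ⊗ₖ T))
          = (Matrix.reindex e e) (pt ρ ⊗ₖ pt ω - -(S ⊗ₖ T)) := by
        rw [hptτ]; rfl
      rw [heq]
      exact psd_reindex e hkey.1
    · show ((Matrix.reindex e e) (S ⊗ₖ T) - pt τ).PosSemidef
      have heq : (Matrix.reindex e e) (S ⊗ₖ T) - pt τ
          = (Matrix.reindex e e) (S ⊗ₖ T - pt ρ ⊗ₖ pt ω) := by
        rw [hptτ]; rfl
      rw [heq]
      exact psd_reindex e hkey.2
    · have hS0' : S.trace.im = 0 := psd_trace_im_zero hSsep.posSemidef.1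
      have hT0' : T.trace.im = 0 := psd_trace_im_zero hTsep.posSemidef.1
      rw [trace_reindex, Matrix.trace_kronecker, Complex.mul_re, hS0', hT0']
      ring

end
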